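/- For 0 < q < 1, 0 < z < 1, and n ≥ 0, the identity I_n(q;z)·(z^{n+1}/(q;q)_{n+1} - z^n/(q;q)_n) + z^{2n+1}/((q;q)_n (q;q)_{n+1}) = Σ_{k=0}^∞ (q^{n+1} - q^{n+k+2})/((q;q)_{n+1}(q;q)_{n+k+2}) · z^{2n+2+k} holds. -/

import Mathlib

open Finset Filter Topology

noncomputable def qPoch (q : ℝ) (m : ℕ) : ℝ := ∏ j ∈ Finset.range m, (1 - q ^ (j + 1))

/-- Tail of the q-exponential e(q;z) starting at index m; I_n(q;z) = qexpTail q z (n+1). -/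
noncomputable def qexpTail (q z : ℝ) (m : ℕ) : ℝ := ∑' k : ℕ, z ^ (m + k) / qPoch q (m + k)

lemma qPoch_pos {q : ℝ} (hq0 : 0 < q) (hq1 : q < 1) (m : ℕ) : 0 < qPoch q m := by
  apply Finset.prod_pos
  intro j _
  have : q ^ (j + 1) < 1 := pow_lt_one₀ hq0.le hq1 (Nat.succ_ne_zero j)
  linarith

lemma qPoch_succ (q : ℝ) (m : ℕ) : qPoch q (m + 1) = qPoch q m * (1 - q ^ (m + 1)) := by
  simp [qPoch, Finset.prod_range_succ]

lemma summable_g {q z : ℝ} (hq0 : 0 < q) (hq1 : q < 1) (hz0 : 0 < z) (hz1 : z < 1) :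
    Summable (fun k : ℕ => z ^ k / qPoch q k) := by
  apply summable_of_ratio_norm_eventually_le (r := (1 + z) / 2) (by linarith)
  have hq : Tendsto (fun k : ℕ => q ^ (k + 1)) atTop (𝓝 0) := by
    have := tendsto_pow_atTop_nhds_zero_of_lt_one hq0.le hq1
    exact this.comp (tendsto_add_atTop_nat 1)
  have hev : ∀ᶠ k : ℕ in atTop, q ^ (k + 1) < (1 - z) / (1 + z) :=
    hq.eventually_lt_const (div_pos (by linarith) (by linarith))
  filter_upwards [hev] with k hk
  have hPk := qPoch_pos hq0 hq1 k
  have hPk1 := qPoch_pos hq0 hq1 (k + 1)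
  have hqk : q ^ (k + 1) < 1 := pow_lt_one₀ hq0.le hq1 (Nat.succ_ne_zero k)
  rw [Real.norm_eq_abs, Real.norm_eq_abs, abs_of_pos (by positivity), abs_of_pos (by positivity),
    qPoch_succ]
  rw [div_le_iff₀ (by nlinarith), pow_succ]
  have hzr : z ≤ (1 + z) / 2 * (1 - q ^ (k + 1)) := by
    rw [lt_div_iff₀ (by linarith)] at hk
    nlinarith
  have heq : (1 + z) / 2 * (z ^ k / qPoch q k) * (qPoch q k * (1 - q ^ (k + 1)))
      = ((1 + z) / 2 * (1 - q ^ (k + 1))) * z ^ k := by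
    field_simp
  rw [heq]
  nlinarith [pow_pos hz0 k]

theorem I_linear_identity (q z : ℝ) (n : ℕ) (hq0 : 0 < q) (hq1 : q < 1)
    (hz0 : 0 < z) (hz1 : z < 1) :
    qexpTail q z (n + 1) * (z ^ (n + 1) / qPoch q (n + 1) - z ^ n / qPoch q n) +
        z ^ (2 * n + 1) / (qPoch q n * qPoch q (n + 1)) =
      ∑' k : ℕ, (q ^ (n + 1) - q ^ (n + k + 2)) / (qPoch q (n + 1) * qPoch q (n + k + 2)) *
        z ^ (2 * n + 2 + k) := by
  have hP : ∀ m, 0 < qPoch q m := qPoch_pos hq0 hq1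
  have hg : Summable (fun k : ℕ => z ^ k / qPoch q k) := summable_g hq0 hq1 hz0 hz1
  have hshift : ∀ m : ℕ, Summable (fun k : ℕ => z ^ (m + k) / qPoch q (m + k)) := by
    intro m
    have := (summable_nat_add_iff m).mpr hg
    simpa [add_comm] using this
  set A := z ^ (n + 1) / qPoch q (n + 1) with hA
  set B := z ^ n / qPoch q n with hB
  have ha : Summable (fun k : ℕ => z ^ (n + 1 + k) / qPoch q (n + 1 + k) * A) :=
    (hshift (n + 1)).mul_right A
  have hb : Summable (fun k : ℕ => z ^ (n + 1 + k) / qPoch q (n + 1 + k) * B) :=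
    (hshift (n + 1)).mul_right B
  have hb' : Summable (fun k : ℕ => z ^ (n + 2 + k) / qPoch q (n + 2 + k) * B) :=
    (hshift (n + 2)).mul_right B
  have step1 : qexpTail q z (n + 1) * (A - B)
      = ∑' k : ℕ, (z ^ (n + 1 + k) / qPoch q (n + 1 + k) * A
          - z ^ (n + 1 + k) / qPoch q (n + 1 + k) * B) := by
    rw [qexpTail, ← tsum_mul_right]
    exact tsum_congr fun k => by ring
  have step2 : (∑' k : ℕ, (z ^ (n + 1 + k) / qPoch q (n + 1 + k) * A
          - z ^ (n + 1 + k) / qPoch q (n + 1 + k) * B))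
      = (∑' k : ℕ, z ^ (n + 1 + k) / qPoch q (n + 1 + k) * A)
        - (∑' k : ℕ, z ^ (n + 1 + k) / qPoch q (n + 1 + k) * B) := Summable.tsum_sub ha hb
  have step3 : (∑' k : ℕ, z ^ (n + 1 + k) / qPoch q (n + 1 + k) * B)
      = z ^ (n + 1) / qPoch q (n + 1) * B
        + ∑' k : ℕ, z ^ (n + 2 + k) / qPoch q (n + 2 + k) * B := by
    rw [Summable.tsum_eq_zero_add hb]
    simp only [add_zero]
    congr 1
    exact tsum_congr fun k => by
      have h : n + 1 + (k + 1) = n + 2 + k := by ring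
      rw [h]
  have hC : z ^ (n + 1) / qPoch q (n + 1) * B = z ^ (2 * n + 1) / (qPoch q n * qPoch q (n + 1)) := by
    rw [hB]
    field_simp
    ring
  rw [step1, step2, step3, hC]
  have key : (∑' k : ℕ, z ^ (n + 1 + k) / qPoch q (n + 1 + k) * A)
      - (∑' k : ℕ, z ^ (n + 2 + k) / qPoch q (n + 2 + k) * B)
      = ∑' k : ℕ, (q ^ (n + 1) - q ^ (n + k + 2)) / (qPoch q (n + 1) * qPoch q (n + k + 2)) *
        z ^ (2 * n + 2 + k) := by
    rw [← Summable.tsum_sub ha hb']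
    apply tsum_congr
    intro k
    have e1 : qPoch q (n + 2 + k) = qPoch q (n + 1 + k) * (1 - q ^ (n + 2 + k)) := by
      have : n + 2 + k = (n + 1 + k) + 1 := by ring
      rw [this, qPoch_succ]
    have e2 : qPoch q (n + 1) = qPoch q n * (1 - q ^ (n + 1)) := qPoch_succ q n
    have hq1k : (0:ℝ) < 1 - q ^ (n + 2 + k) := by
      have : q ^ (n + 2 + k) < 1 := pow_lt_one₀ hq0.le hq1 (by omega)
      linarith
    have hq1n : (0:ℝ) < 1 - q ^ (n + 1) := by
      have : q ^ (n + 1) < 1 := pow_lt_one₀ hq0.le hq1 (by omega)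
      linarith
    have hPn := hP n
    have hPnk := hP (n + 1 + k)
    have e3 : n + k + 2 = n + 2 + k := by ring
    rw [hA, hB, e3, e1, e2]
    field_simp
    ring
  linarith [key]
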